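/- Let μ > 0 and λ > 0, and define for real 2×2 matrices E near 0 the function w(E) = μ·(1 + trace E) + (λ/4)·det(I + 2E) − ((μ + λ/2)/2)·ln(det(I + 2E)) − μ − λ/4. Then as E → 0, w(E) − (λ/2)·(trace E)² − μ·trace(E·E) = O(‖E‖³). -/
import Mathlib


attribute [local instance] Matrix.frobeniusNormedAddCommGroup Matrix.frobeniusNormedSpace

lemma entry_le_frob (E : Matrix (Fin 2) (Fin 2) ℝ) (i j : Fin 2) : |E i j| ≤ ‖E‖ := by
  have h : ‖E‖ = Real.sqrt (∑ i', ∑ j', (E i' j')^2) := by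
    rw [Matrix.frobenius_norm_def, Real.sqrt_eq_rpow]
    norm_num [Real.norm_eq_abs, Real.rpow_natCast, sq_abs]
  rw [h, ← Real.sqrt_sq_eq_abs]
  apply Real.sqrt_le_sqrt
  have h1 : (E i j)^2 ≤ ∑ j', (E i j')^2 :=
    Finset.single_le_sum (f := fun j' => (E i j')^2) (fun _ _ => sq_nonneg _) (Finset.mem_univ j)
  refine h1.trans (Finset.single_le_sum (f := fun i' => ∑ j', (E i' j')^2)
    (fun _ _ => Finset.sum_nonneg fun _ _ => sq_nonneg _) (Finset.mem_univ i))

lemma log_taylor2 (u : ℝ) (h : |u| ≤ 1/2) : |Real.log (1+u) - u + u^2/2| ≤ 2*|u|^3 := by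
  have h1 : |(-u)| < 1 := by rw [abs_neg]; linarith
  have key := Real.abs_log_sub_add_sum_range_le h1 2
  simp [Finset.sum_range_succ] at key
  have he : -u + u^2/(1+1) + Real.log (1+u) = Real.log (1+u) - u + u^2/2 := by ring
  rw [he] at key
  have h3 : |u|^3 / (1 - |u|) ≤ 2*|u|^3 := by
    rw [div_le_iff₀ (by linarith [abs_nonneg u])]
    nlinarith [pow_nonneg (abs_nonneg u) 3]
  exact key.trans h3

set_option maxHeartbeats 1000000 in
/-- Pure real-number core estimate. -/
lemma core_bound (μ lam n a b c d : ℝ) (hμ : 0 < μ) (hlam : 0 < lam)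
    (hn0 : 0 ≤ n) (hnlt : n < 1/20)
    (hA : |a| ≤ n) (hB : |b| ≤ n) (hC : |c| ≤ n) (hD : |d| ≤ n) :
    |μ * (1 + (a + d)) + lam / 4 * (1 + (2*(a+d) + 2*(a+d)^2 - 2*(a^2 + 2*(b*c) + d^2)))
      - (μ + lam / 2) / 2 *
        Real.log (1 + (2*(a+d) + 2*(a+d)^2 - 2*(a^2 + 2*(b*c) + d^2)))
      - μ - lam / 4 - lam / 2 * (a + d) ^ 2 - μ * (a^2 + 2*(b*c) + d^2)|
      ≤ 200 * (μ + lam) * n ^ 3 := by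
  set t : ℝ := a + d with ht_def
  set s : ℝ := a^2 + 2*(b*c) + d^2 with hs_def
  set u : ℝ := 2*t + 2*t^2 - 2*s with hu_def
  rcases abs_le.mp hA with ⟨hA1, hA2⟩
  rcases abs_le.mp hB with ⟨hB1, hB2⟩
  rcases abs_le.mp hC with ⟨hC1, hC2⟩
  rcases abs_le.mp hD with ⟨hD1, hD2⟩
  have ht2 : |t| ≤ 2 * n := by rw [ht_def, abs_le]; constructor <;> linarith
  have hs2 : |s| ≤ 4 * n^2 := by
    rw [hs_def, abs_le]
    constructor <;> nlinarith [sq_nonneg (b - c), sq_nonneg (b + c), sq_nonneg a, sq_nonneg d]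
  rcases abs_le.mp ht2 with ⟨ht1, ht2'⟩
  rcases abs_le.mp hs2 with ⟨hs1, hs2'⟩
  have htsq : t^2 ≤ 4 * n^2 := by nlinarith [sq_nonneg (t - 2*n), sq_nonneg (t + 2*n)]
  have hn2 : n^2 ≤ n / 20 := by nlinarith
  clear_value t s u
  clear hA hB hC hD hA1 hA2 hB1 hB2 hC1 hC2 hD1 hD2 ht_def hs_def
  have hu5 : |u| ≤ 5 * n := by
    rw [hu_def, abs_le]
    constructor
    · linarith [sq_nonneg t]
    · linarith
  have hu12 : |u| ≤ 1/2 := by linarith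
  have hr := log_taylor2 u hu12
  have hu3 : |u|^3 ≤ 125 * n^3 := by
    calc |u|^3 ≤ (5*n)^3 := pow_le_pow_left₀ (abs_nonneg u) hu5 3
      _ = 125 * n^3 := by ring
  have hP : |2*t^3 - 2*t*s + (t^2 - s)^2| ≤ 40 * n^3 := by
    have h1 : |t|^3 ≤ 8 * n^3 := by
      calc |t|^3 ≤ (2*n)^3 := pow_le_pow_left₀ (abs_nonneg t) ht2 3
        _ = 8 * n^3 := by ring
    have h2 : |t*s| ≤ 8 * n^3 := by
      rw [abs_mul]
      calc |t| * |s| ≤ (2*n) * (4*n^2) := mul_le_mul ht2 hs2 (abs_nonneg s) (by linarith)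
        _ = 8 * n^3 := by ring
    have h3 : (t^2 - s)^2 ≤ 4 * n^3 := by
      have hts : |t^2 - s| ≤ 8 * n^2 := by
        rw [abs_le]; constructor
        · linarith [sq_nonneg t]
        · linarith
      have h4 := mul_le_mul hts hts (abs_nonneg _) (by positivity)
      have habs : |t^2 - s| * |t^2 - s| = (t^2 - s)^2 := by rw [← sq, sq_abs]
      nlinarith [pow_nonneg hn0 3]
    calc |2*t^3 - 2*t*s + (t^2 - s)^2|
        ≤ |2*t^3 - 2*t*s| + |(t^2 - s)^2| := abs_add_le _ _
      _ ≤ |2*t^3| + |2*t*s| + |(t^2 - s)^2| := by linarith [abs_sub (2*t^3) (2*t*s)]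
      _ = 2*|t|^3 + 2*|t*s| + (t^2 - s)^2 := by
          rw [abs_of_nonneg (sq_nonneg (t^2 - s))]
          rw [show (2*t^3 : ℝ) = 2*(t^3) by ring, show (2*t*s : ℝ) = 2*(t*s) by ring,
            abs_mul 2, abs_mul 2, abs_pow, abs_two]
      _ ≤ 40 * n^3 := by nlinarith [pow_nonneg hn0 3]
  set cc : ℝ := (μ + lam/2)/2 with hcc_def
  have hcc0 : 0 < cc := by rw [hcc_def]; linarith
  set r : ℝ := Real.log (1 + u) - u + u^2/2 with hr_def
  have key : μ * (1 + t) + lam / 4 * (1 + u) - (μ + lam / 2) / 2 * Real.log (1 + u)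
      - μ - lam / 4 - lam / 2 * t ^ 2 - μ * s
      = 2 * cc * (2*t^3 - 2*t*s + (t^2 - s)^2) - cc * r := by
    rw [hr_def, hcc_def, hu_def]; ring
  rw [hu_def] at key ⊢
  rw [key]
  calc |2 * cc * (2*t^3 - 2*t*s + (t^2 - s)^2) - cc * r|
      ≤ |2 * cc * (2*t^3 - 2*t*s + (t^2 - s)^2)| + |cc * r| := abs_sub _ _
    _ = 2 * cc * |2*t^3 - 2*t*s + (t^2 - s)^2| + cc * |r| := by
        rw [abs_mul (2*cc), abs_mul cc, abs_of_pos (show (0:ℝ) < 2*cc by linarith),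
          abs_of_pos hcc0]
    _ ≤ 2 * cc * (40 * n^3) + cc * (250 * n^3) := by
        have hr' : |r| ≤ 250 * n^3 := by linarith
        gcongr
    _ ≤ 200 * (μ + lam) * n^3 := by nlinarith [pow_nonneg hn0 3, hcc_def]

/-- Let `μ > 0` and `λ > 0`, and define for real 2×2 matrices `E` the function
`w(E) = μ·(1 + trace E) + (λ/4)·det(I + 2E) − ((μ + λ/2)/2)·ln(det(I + 2E)) − μ − λ/4`.
Then as `E → 0`, `w(E) − (λ/2)·(trace E)² − μ·trace(E·E) = O(‖E‖³)`. -/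
theorem stored_energy_quadratic_expansion (μ lam : ℝ) (hμ : 0 < μ) (hlam : 0 < lam) :
    Asymptotics.IsBigO (nhds (0 : Matrix (Fin 2) (Fin 2) ℝ))
      (fun E : Matrix (Fin 2) (Fin 2) ℝ =>
        (μ * (1 + E.trace)
            + lam / 4 * ((1 : Matrix (Fin 2) (Fin 2) ℝ) + 2 • E).det
            - (μ + lam / 2) / 2 * Real.log (((1 : Matrix (Fin 2) (Fin 2) ℝ) + 2 • E).det)
            - μ - lam / 4)
          - lam / 2 * E.trace ^ 2 - μ * (E * E).trace)
      (fun E : Matrix (Fin 2) (Fin 2) ℝ => ‖E‖ ^ 3) := by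
  rw [Asymptotics.isBigO_iff]
  refine ⟨200 * (μ + lam), ?_⟩
  filter_upwards [Metric.ball_mem_nhds (0 : Matrix (Fin 2) (Fin 2) ℝ) (by norm_num : (0:ℝ) < 1/20)]
    with E hE
  have hnlt : ‖E‖ < 1/20 := by simpa using mem_ball_zero_iff.mp hE
  have htr : E.trace = E 0 0 + E 1 1 := by rw [Matrix.trace_fin_two]
  have hmtr : (E * E).trace = (E 0 0)^2 + 2*(E 0 1 * E 1 0) + (E 1 1)^2 := by
    rw [Matrix.trace_fin_two]
    simp only [Matrix.mul_apply, Fin.sum_univ_two]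
    ring
  have hdet : ((1 : Matrix (Fin 2) (Fin 2) ℝ) + 2 • E).det
      = 1 + (2*(E 0 0 + E 1 1) + 2*(E 0 0 + E 1 1)^2
          - 2*((E 0 0)^2 + 2*(E 0 1 * E 1 0) + (E 1 1)^2)) := by
    rw [Matrix.det_fin_two]
    simp only [Matrix.add_apply, Matrix.smul_apply, Matrix.one_apply_eq,
      Matrix.one_apply_ne (by decide : (0 : Fin 2) ≠ 1),
      Matrix.one_apply_ne (by decide : (1 : Fin 2) ≠ 0), smul_eq_mul]
    ring
  simp only [Real.norm_eq_abs, htr, hmtr, hdet]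
  rw [abs_of_nonneg (by positivity : (0:ℝ) ≤ ‖E‖^3)]
  exact core_bound μ lam ‖E‖ (E 0 0) (E 0 1) (E 1 0) (E 1 1) hμ hlam (norm_nonneg E) hnlt
    (entry_le_frob E 0 0) (entry_le_frob E 0 1) (entry_le_frob E 1 0) (entry_le_frob E 1 1)
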